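/- Let Γ be a finite graph with directed edges and Cheeger constant h(Γ) = (1/2)·inf{|∂F|/|F| : ∅ ≠ F ⊆ Γ, |F| ≤ |Γ|/2}, where ∂F is the set of directed edges with exactly one endpoint in F. If the coboundary map d : ℓ¹(Γ)/ℂ → ℓ¹(E) satisfies ‖df̄‖_{ℓ¹} ≥ ε‖f̄‖_{ℓ¹/ℂ} for all f̄, then h(Γ) ≥ ε/2. -/

import Mathlib

open scoped BigOperators

/-- The set of directed edges of `E` with exactly one endpoint in `F`. -/
def boundaryEdges {Γ : Type*} [DecidableEq Γ] (E : Finset (Γ × Γ)) (F : Finset Γ) :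
    Finset (Γ × Γ) :=
  E.filter (fun e => (e.1 ∈ F ∧ e.2 ∉ F) ∨ (e.2 ∈ F ∧ e.1 ∉ F))

/-- if `‖d f̄‖₁ ≥ ε ‖f̄‖_{ℓ¹/ℂ}` for every `f̄ ∈ ℓ¹(Γ)/ℂ`, then the
Cheeger constant satisfies `h(Γ) ≥ ε/2`, i.e. `|∂F| ≥ ε |F|` for every nonempty
`F ⊆ Γ` with `|F| ≤ |Γ|/2`. -/
theorem cheeger_of_coboundary_bounded_below (Γ : Type*) [Fintype Γ] [DecidableEq Γ]
    (E : Finset (Γ × Γ)) (hsymm : ∀ x y : Γ, (x, y) ∈ E ↔ (y, x) ∈ E) (ε : ℝ)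
    (h : ∀ f : Γ → ℂ,
      ε * sInf {r : ℝ | ∃ c : ℂ, r = ∑ γ, ‖f γ + c‖} ≤
        ∑ e ∈ E, ‖f e.2 - f e.1‖) :
    ∀ F : Finset Γ, F.Nonempty → 2 * F.card ≤ Fintype.card Γ →
      ε * F.card ≤ ((boundaryEdges E F).card : ℝ) := by
  intro F hF hcard
  rcases le_or_gt ε 0 with hε | hε
  · have h2 : (0 : ℝ) ≤ (boundaryEdges E F).card := Nat.cast_nonneg _
    nlinarith [Nat.cast_nonneg (α := ℝ) F.card]
  · set f : Γ → ℂ := fun γ => if γ ∈ F then 1 else 0 with hf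
    have hsum : ∑ e ∈ E, ‖f e.2 - f e.1‖ = (boundaryEdges E F).card := by
      rw [boundaryEdges, Finset.card_filter]
      push_cast
      apply Finset.sum_congr rfl
      intro e _
      by_cases h1 : e.1 ∈ F <;> by_cases h2 : e.2 ∈ F <;> simp [hf, h1, h2]
    have hne : Set.Nonempty {r : ℝ | ∃ c : ℂ, r = ∑ γ, ‖f γ + c‖} :=
      ⟨_, 0, rfl⟩
    have hlb : (F.card : ℝ) ≤ sInf {r : ℝ | ∃ c : ℂ, r = ∑ γ, ‖f γ + c‖} := by
      apply le_csInf hne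
      rintro r ⟨c, rfl⟩
      have hsplit : ∑ γ, ‖f γ + c‖
          = F.card * ‖1 + c‖ + Fᶜ.card * ‖c‖ := by
        rw [← Finset.sum_add_sum_compl F]
        congr 1
        · calc ∑ γ ∈ F, ‖f γ + c‖ = ∑ _γ ∈ F, ‖1 + c‖ :=
                Finset.sum_congr rfl (fun γ hγ => by simp [hf, hγ])
            _ = F.card * ‖1 + c‖ := by rw [Finset.sum_const, nsmul_eq_mul]
        · calc ∑ γ ∈ Fᶜ, ‖f γ + c‖ = ∑ _γ ∈ Fᶜ, ‖c‖ :=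
                Finset.sum_congr rfl (fun γ hγ => by simp [hf, Finset.mem_compl.mp hγ])
            _ = Fᶜ.card * ‖c‖ := by rw [Finset.sum_const, nsmul_eq_mul]
      have htri : (1 : ℝ) ≤ ‖1 + c‖ + ‖c‖ := by
        have := norm_add_le (1 + c) (-c)
        simpa using this
      have hcc : (F.card : ℝ) ≤ (Fᶜ.card : ℝ) := by
        rw [Finset.card_compl]
        have hle : F.card ≤ Fintype.card Γ := Finset.card_le_univ F
        rw [Nat.cast_sub hle]
        have : (2 : ℝ) * F.card ≤ Fintype.card Γ := by exact_mod_cast hcard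
        linarith
      have hab : (0 : ℝ) ≤ ‖c‖ := norm_nonneg c
      have hab2 : (0 : ℝ) ≤ ‖1 + c‖ := norm_nonneg _
      rw [hsplit]
      nlinarith [Nat.cast_nonneg (α := ℝ) F.card]
    have := h f
    rw [hsum] at this
    calc ε * F.card ≤ ε * sInf {r : ℝ | ∃ c : ℂ, r = ∑ γ, ‖f γ + c‖} := by
          exact mul_le_mul_of_nonneg_left hlb (le_of_lt hε)
      _ ≤ _ := this
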